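/- arXiv:2505.03210 — 2 statements merged into one kernel-verified Lean document; each statement's English description precedes it below -/
import Mathlib

section
/- Let (B, ‖·‖_B) be a Banach space, let p, q > 0, and let (a_n)_{n≥1} be a sequence in B such that the Cesàro averages (1/N)·∑_{n=1}^{N} a_n converge in norm to some a ∈ B as N → ∞. Then the weighted averages (A_N^{p,q})^{-1}·∑_{n=1}^{N} w_{p,q}(n/N)·a_n also converge in norm to a as N → ∞. -/
open MeasureTheory Filter
open Finset Nat Set

/-- The weighting function `w_{p,q}`. -/
noncomputable def wpq (p q : ℝ) (x : ℝ) : ℝ :=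
  if x ∈ Set.Ioo (0 : ℝ) 1 then
    (∫ s in (0:ℝ)..1, Real.exp (-(s ^ (-p) * (1 - s) ^ (-q))))⁻¹ *
      Real.exp (-(x ^ (-p) * (1 - x) ^ (-q)))
  else 0

/-- The normalizer `A_N^{p,q} = ∑_{n=0}^{N-1} w_{p,q}(n/N)`. -/
noncomputable def Apq (p q : ℝ) (N : ℕ) : ℝ :=
  ∑ n ∈ Finset.range N, wpq p q ((n : ℝ) / N)

noncomputable def cpq (p q : ℝ) : ℝ :=
  ∫ s in (0:ℝ)..1, Real.exp (-(s ^ (-p) * (1 - s) ^ (-q)))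

noncomputable def Wf (p q : ℝ) (x : ℝ) : ℝ :=
  (cpq p q)⁻¹ * expNegInvGlue (x ^ p * (1 - x) ^ q)

lemma tfun_cont (p q : ℝ) (hp : 0 < p) (hq : 0 < q) :
    Continuous (fun x : ℝ => x ^ p * (1 - x) ^ q) :=
  (Real.continuous_rpow_const hp.le).mul
    ((Real.continuous_rpow_const hq.le).comp (continuous_const.sub continuous_id))


lemma Wf_cont (p q : ℝ) (hp : 0 < p) (hq : 0 < q) : Continuous (Wf p q) :=
  continuous_const.mul
    ((expNegInvGlue.contDiff (n := 0)).continuous.comp (tfun_cont p q hp hq))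


lemma expNegInvGlue_pos_eq {t : ℝ} (ht : 0 < t) : expNegInvGlue t = Real.exp (-t⁻¹) := by
  simp [expNegInvGlue, not_le.2 ht]


lemma cpq_pos (p q : ℝ) (hp : 0 < p) (hq : 0 < q) : 0 < cpq p q := by
  have hG : Continuous (fun s : ℝ => expNegInvGlue (s ^ p * (1 - s) ^ q)) :=
    (expNegInvGlue.contDiff (n := 0)).continuous.comp (tfun_cont p q hp hq)
  have hint : IntervalIntegrable
      (fun s : ℝ => Real.exp (-(s ^ (-p) * (1 - s) ^ (-q)))) volume 0 1 := by
    rw [intervalIntegrable_iff_integrableOn_Ioo_of_le zero_le_one]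
    have h1 : IntegrableOn (fun s : ℝ => expNegInvGlue (s ^ p * (1 - s) ^ q))
        (Set.Ioo (0:ℝ) 1) volume :=
      (hG.integrableOn_Icc (a := 0) (b := 1)).mono_set Set.Ioo_subset_Icc_self
    refine h1.congr_fun ?_ measurableSet_Ioo
    intro s hs
    have hs0 : (0:ℝ) < s := hs.1
    have hs1 : s < 1 := hs.2
    have ht : 0 < s ^ p * (1 - s) ^ q :=
      mul_pos (Real.rpow_pos_of_pos hs0 p) (Real.rpow_pos_of_pos (by linarith) q)
    show expNegInvGlue (s ^ p * (1 - s) ^ q) = Real.exp (-(s ^ (-p) * (1 - s) ^ (-q)))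
    rw [expNegInvGlue_pos_eq ht, Real.rpow_neg hs0.le,
      Real.rpow_neg (by linarith : (0:ℝ) ≤ 1 - s), ← mul_inv]
  exact intervalIntegral.intervalIntegral_pos_of_pos_on hint
    (fun x _ => Real.exp_pos _) zero_lt_one


lemma wpq_eq_Wf (p q : ℝ) (hp : 0 < p) (hq : 0 < q) {x : ℝ} (hx : x ∈ Set.Icc (0:ℝ) 1) :
    wpq p q x = Wf p q x := by
  rcases eq_or_lt_of_le hx.1 with h0 | h0
  · rw [← h0]
    simp [wpq, Wf, Real.zero_rpow hp.ne', expNegInvGlue.zero]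
  rcases eq_or_lt_of_le hx.2 with h1 | h1
  · rw [h1]
    simp [wpq, Wf, Real.zero_rpow hq.ne', expNegInvGlue.zero]
  have hmem : x ∈ Set.Ioo (0:ℝ) 1 := ⟨h0, h1⟩
  have ht : 0 < x ^ p * (1 - x) ^ q :=
    mul_pos (Real.rpow_pos_of_pos h0 p) (Real.rpow_pos_of_pos (by linarith) q)
  rw [wpq, if_pos hmem, Wf, expNegInvGlue_pos_eq ht, Real.rpow_neg h0.le,
    Real.rpow_neg (by linarith : (0:ℝ) ≤ 1 - x), ← mul_inv, cpq]


lemma wpq_nonneg (p q : ℝ) (hp : 0 < p) (hq : 0 < q) (x : ℝ) : 0 ≤ wpq p q x := by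
  unfold wpq
  split
  · exact mul_nonneg (inv_nonneg.2 (cpq_pos p q hp hq).le) (Real.exp_pos _).le
  · exact le_refl 0


lemma wpq_zero_of_not_mem (p q : ℝ) {x : ℝ} (hx : x ∉ Set.Ioo (0:ℝ) 1) : wpq p q x = 0 := by
  rw [wpq, if_neg hx]


lemma exp_neg_inv_le {t : ℝ} (ht : 0 < t) (n : ℕ) :
    Real.exp (-t⁻¹) ≤ (n ! : ℝ) * t ^ n := by
  have h0 : (0:ℝ) ≤ t⁻¹ := by positivity
  have hsum := Real.sum_le_exp_of_nonneg h0 (n + 1)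
  have hterm : t⁻¹ ^ n / (n ! : ℝ) ≤ Real.exp t⁻¹ :=
    le_trans (Finset.single_le_sum (f := fun i => t⁻¹ ^ i / (i ! : ℝ))
      (fun i _ => by positivity) (Finset.self_mem_range_succ n)) hsum
  have hpos : (0:ℝ) < t⁻¹ ^ n / (n ! : ℝ) := by positivity
  have h2 := inv_anti₀ hpos hterm
  rw [← Real.exp_neg] at h2
  refine h2.trans (le_of_eq ?_)
  have hne : t ≠ 0 := ht.ne'
  field_simp
  rw [← mul_pow, one_div, inv_mul_cancel₀ hne, one_pow]


lemma aux_est {p q r s : ℝ} (hp : 0 < p) (hq : 0 < q) (hr0 : 0 < r) (hr1 : r ≤ 1)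
    (hs0 : 0 < s) (hs1 : s ≤ 1) {m : ℕ} (h1 : 1 ≤ ((m : ℝ) + 1) * p) :
    Real.exp (-(r ^ p * s ^ q)⁻¹) * (r ^ (p - 1) * s ^ q)
      ≤ ((m + 2)! : ℝ) * (r ^ p * s ^ q) ^ 2 := by
  set t := r ^ p * s ^ q with htdef
  have htr : (0:ℝ) < r ^ p := Real.rpow_pos_of_pos hr0 p
  have hts : (0:ℝ) < s ^ q := Real.rpow_pos_of_pos hs0 q
  have ht : 0 < t := mul_pos htr hts
  have key := exp_neg_inv_le ht (m + 2)
  have hfac : t ^ (m + 2) = t ^ 2 * t ^ m := by ring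
  have hmain : t ^ m * (r ^ (p - 1) * s ^ q) ≤ 1 := by
    have e1 : t ^ m * (r ^ (p - 1) * s ^ q)
        = r ^ (p * m + (p - 1)) * s ^ (q * m + q) := by
      rw [htdef, mul_pow, ← Real.rpow_natCast (r ^ p) m, ← Real.rpow_natCast (s ^ q) m,
        ← Real.rpow_mul hr0.le, ← Real.rpow_mul hs0.le,
        Real.rpow_add hr0, Real.rpow_add hs0]
      ring
    rw [e1]
    have hexp1 : 0 ≤ p * m + (p - 1) := by nlinarith [hp.le]
    have hexp2 : 0 ≤ q * m + q := by positivity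
    calc r ^ (p * m + (p - 1)) * s ^ (q * m + q)
        ≤ 1 * 1 := by
          exact mul_le_mul (Real.rpow_le_one hr0.le hr1 hexp1)
            (Real.rpow_le_one hs0.le hs1 hexp2)
            (Real.rpow_nonneg hs0.le _) zero_le_one
      _ = 1 := by ring
  have hn : 0 ≤ r ^ (p - 1) * s ^ q :=
    mul_nonneg (Real.rpow_nonneg hr0.le _) (Real.rpow_nonneg hs0.le _)
  calc Real.exp (-t⁻¹) * (r ^ (p - 1) * s ^ q)
      ≤ ((m + 2)! : ℝ) * t ^ (m + 2) * (r ^ (p - 1) * s ^ q) :=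
        mul_le_mul_of_nonneg_right key hn
    _ = ((m + 2)! : ℝ) * t ^ 2 * (t ^ m * (r ^ (p - 1) * s ^ q)) := by rw [hfac]; ring
    _ ≤ ((m + 2)! : ℝ) * t ^ 2 * 1 := by
        refine mul_le_mul_of_nonneg_left hmain (by positivity)
    _ = ((m + 2)! : ℝ) * t ^ 2 := by ring


lemma Wf_lipschitz (p q : ℝ) (hp : 0 < p) (hq : 0 < q) :
    ∃ M : ℝ, 0 ≤ M ∧ ∀ x ∈ Set.Icc (0:ℝ) 1, ∀ y ∈ Set.Icc (0:ℝ) 1,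
      |Wf p q x - Wf p q y| ≤ M * |x - y| := by
  set c : ℝ := cpq p q with hcdef
  have hc : 0 < c := cpq_pos p q hp hq
  set m : ℕ := ⌈1/p⌉₊ + ⌈1/q⌉₊ with hmdef
  set K : ℝ := ((m + 2)! : ℝ) with hKdef
  have hK : 0 < K := by positivity
  have hm1 : 1 ≤ ((m : ℝ) + 1) * p := by
    have h1 : (1:ℝ)/p ≤ ⌈1/p⌉₊ := Nat.le_ceil _
    have h2 : ((⌈1/p⌉₊ : ℝ)) ≤ m := by
      have : (⌈1/p⌉₊ : ℕ) ≤ m := by omega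
      exact_mod_cast this
    have : (1:ℝ)/p ≤ (m : ℝ) + 1 := by linarith
    rw [div_le_iff₀ hp] at this
    linarith [mul_le_mul_of_nonneg_right (le_refl ((m:ℝ)+1)) hp.le]
  have hm2 : 1 ≤ ((m : ℝ) + 1) * q := by
    have h1 : (1:ℝ)/q ≤ ⌈1/q⌉₊ := Nat.le_ceil _
    have h2 : ((⌈1/q⌉₊ : ℝ)) ≤ m := by
      have : (⌈1/q⌉₊ : ℕ) ≤ m := by omega
      exact_mod_cast this
    have : (1:ℝ)/q ≤ (m : ℝ) + 1 := by linarith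
    rw [div_le_iff₀ hq] at this
    linarith
  set M : ℝ := c⁻¹ * (K * (p + q)) with hMdef
  have hM : 0 ≤ M := by positivity
  refine ⟨M, hM, ?_⟩
  -- derivative data
  set T : ℝ → ℝ := fun x => x ^ p * (1 - x) ^ q with hTdef
  set T' : ℝ → ℝ := fun x =>
    p * x ^ (p - 1) * (1 - x) ^ q + x ^ p * (q * (1 - x) ^ (q - 1) * (-1)) with hT'def
  set D : ℝ → ℝ := fun x =>
    c⁻¹ * (Real.exp (-(T x)⁻¹) * -(-T' x / T x ^ 2)) with hDdef
  have hTpos : ∀ x ∈ Set.Ioo (0:ℝ) 1, 0 < T x := fun x hx =>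
    mul_pos (Real.rpow_pos_of_pos hx.1 p)
      (Real.rpow_pos_of_pos (by linarith [hx.2] : (0:ℝ) < 1 - x) q)
  have hderiv : ∀ x ∈ Set.Ioo (0:ℝ) 1, HasDerivAt (Wf p q) (D x) x := by
    intro x hx
    have hx0 : 0 < x := hx.1
    have hx1 : x < 1 := hx.2
    have h1x : 0 < 1 - x := by linarith
    have hT1 : HasDerivAt (fun y : ℝ => y ^ p) (p * x ^ (p - 1)) x :=
      Real.hasDerivAt_rpow_const (Or.inl hx0.ne')
    have hT2 : HasDerivAt (fun y : ℝ => (1 - y) ^ q) (q * (1 - x) ^ (q - 1) * (-1)) x := by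
      have hin : HasDerivAt (fun y : ℝ => 1 - y) (-1) x := (hasDerivAt_id x).const_sub 1
      exact (Real.hasDerivAt_rpow_const (x := 1 - x) (p := q) (Or.inl h1x.ne')).comp x hin
    have hT : HasDerivAt T (T' x) x := hT1.mul hT2
    have hTne : T x ≠ 0 := (hTpos x hx).ne'
    have hinv : HasDerivAt (fun y => (T y)⁻¹) (-T' x / T x ^ 2) x := hT.inv hTne
    have hexp : HasDerivAt (fun y => Real.exp (-(T y)⁻¹))
        (Real.exp (-(T x)⁻¹) * -(-T' x / T x ^ 2)) x := hinv.neg.exp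
    have hg : HasDerivAt (fun y => c⁻¹ * Real.exp (-(T y)⁻¹)) (D x) x := hexp.const_mul _
    refine hg.congr_of_eventuallyEq ?_
    filter_upwards [isOpen_Ioo.mem_nhds hx] with y hy
    rw [Wf, expNegInvGlue_pos_eq (hTpos y hy)]
  have hbound : ∀ x ∈ Set.Ioo (0:ℝ) 1, ‖D x‖ ≤ M := by
    intro x hx
    have hx0 : 0 < x := hx.1
    have hx1 : x < 1 := hx.2
    have h1x : 0 < 1 - x := by linarith
    have hT := hTpos x hx
    set E : ℝ := Real.exp (-(T x)⁻¹) with hEdef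
    have hE : 0 < E := Real.exp_pos _
    set A : ℝ := p * x ^ (p - 1) * (1 - x) ^ q with hAdef
    set Bt : ℝ := x ^ p * (q * (1 - x) ^ (q - 1)) with hBdef
    have hA : 0 ≤ A := by
      have := Real.rpow_nonneg hx0.le (p - 1)
      have := Real.rpow_nonneg h1x.le q
      positivity
    have hB : 0 ≤ Bt := by
      have := Real.rpow_nonneg hx0.le p
      have := Real.rpow_nonneg h1x.le (q - 1)
      positivity
    have habs : |T' x| ≤ A + Bt := by
      have : T' x = A - Bt := by rw [hT'def]; ring
      rw [this]
      calc |A - Bt| ≤ |A| + |Bt| := abs_sub _ _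
        _ = A + Bt := by rw [abs_of_nonneg hA, abs_of_nonneg hB]
    have first : E * (x ^ (p - 1) * (1 - x) ^ q) ≤ K * T x ^ 2 :=
      aux_est hp hq hx0 hx1.le h1x (by linarith) hm1
    have second' := aux_est hq hp h1x (by linarith : (1:ℝ) - x ≤ 1) hx0 hx1.le hm2
    have hcomm : (1 - x) ^ q * x ^ p = T x := mul_comm _ _
    have second : E * ((1 - x) ^ (q - 1) * x ^ p) ≤ K * T x ^ 2 := by
      rw [hcomm] at second'
      exact second'
    have hsum : E * (A + Bt) ≤ K * (p + q) * T x ^ 2 := by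
      have e : E * (A + Bt)
          = p * (E * (x ^ (p - 1) * (1 - x) ^ q)) + q * (E * ((1 - x) ^ (q - 1) * x ^ p)) := by
        rw [hAdef, hBdef]; ring
      rw [e]
      calc p * (E * (x ^ (p - 1) * (1 - x) ^ q)) + q * (E * ((1 - x) ^ (q - 1) * x ^ p))
          ≤ p * (K * T x ^ 2) + q * (K * T x ^ 2) :=
            add_le_add (mul_le_mul_of_nonneg_left first hp.le)
              (mul_le_mul_of_nonneg_left second hq.le)
        _ = K * (p + q) * T x ^ 2 := by ring
    have hDeq : ‖D x‖ = c⁻¹ * (E * (|T' x| / T x ^ 2)) := by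
      rw [hDdef]
      simp only [Real.norm_eq_abs]
      rw [neg_div, neg_neg, abs_mul, abs_mul, abs_div, abs_of_nonneg (inv_nonneg.2 hc.le),
        abs_of_nonneg hE.le, abs_of_nonneg (sq_nonneg (T x) : (0:ℝ) ≤ T x ^ 2)]
    rw [hDeq, hMdef]
    have hstep : E * (|T' x| / T x ^ 2) ≤ K * (p + q) := by
      rw [mul_div_assoc'] at *
      rw [div_le_iff₀ (by positivity : (0:ℝ) < T x ^ 2)]
      calc E * |T' x| ≤ E * (A + Bt) := mul_le_mul_of_nonneg_left habs hE.le
        _ ≤ K * (p + q) * T x ^ 2 := hsum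
    exact mul_le_mul_of_nonneg_left hstep (inv_nonneg.2 hc.le)
  -- Lipschitz on the open interval
  have hlip : ∀ x ∈ Set.Ioo (0:ℝ) 1, ∀ y ∈ Set.Ioo (0:ℝ) 1,
      |Wf p q x - Wf p q y| ≤ M * |x - y| := by
    intro x hx y hy
    have := (convex_Ioo (0:ℝ) 1).norm_image_sub_le_of_norm_hasDerivWithin_le
      (f := Wf p q) (f' := D)
      (fun z hz => (hderiv z hz).hasDerivWithinAt) (fun z hz => hbound z hz) hy hx
    simpa [Real.norm_eq_abs] using this
  -- extend to the closed interval by continuity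
  intro x hx y hy
  have hcW := Wf_cont p q hp hq
  have key := le_on_closure (α := ℝ) (β := ℝ × ℝ)
    (f := fun z : ℝ × ℝ => |Wf p q z.1 - Wf p q z.2|)
    (g := fun z : ℝ × ℝ => M * |z.1 - z.2|)
    (s := Set.Ioo (0:ℝ) 1 ×ˢ Set.Ioo (0:ℝ) 1)
    (fun z hz => hlip z.1 hz.1 z.2 hz.2)
    (Continuous.continuousOn (by fun_prop))
    (Continuous.continuousOn (by fun_prop))
  have hc2 : closure (Set.Ioo (0:ℝ) 1 ×ˢ Set.Ioo (0:ℝ) 1)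
      = Set.Icc (0:ℝ) 1 ×ˢ Set.Icc (0:ℝ) 1 := by
    rw [closure_prod_eq, closure_Ioo (zero_ne_one)]
  have hmem : ((x, y) : ℝ × ℝ) ∈ closure (Set.Ioo (0:ℝ) 1 ×ˢ Set.Ioo (0:ℝ) 1) := by
    rw [hc2]; exact ⟨hx, hy⟩
  exact key hmem


lemma abel_sum {B : Type*} [AddCommGroup B] [Module ℝ B] (f : ℕ → ℝ) (a : ℕ → B) (N : ℕ) :
    ∑ n ∈ Finset.Icc 1 N, f n • a n
      = (∑ n ∈ Finset.Icc 1 N, (f n - f (n + 1)) • (∑ k ∈ Finset.Icc 1 n, a k))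
        + f (N + 1) • (∑ k ∈ Finset.Icc 1 N, a k) := by
  induction N with
  | zero => simp
  | succ N ih =>
    rw [Finset.sum_Icc_succ_top (Nat.le_add_left 1 N) (fun n => f n • a n),
      Finset.sum_Icc_succ_top (Nat.le_add_left 1 N)
        (fun n => (f n - f (n + 1)) • (∑ k ∈ Finset.Icc 1 n, a k)),
      Finset.sum_Icc_succ_top (Nat.le_add_left 1 N) a, ih]
    simp only [sub_smul, smul_add]
    abel


lemma Wf_min (p q : ℝ) (hp : 0 < p) (hq : 0 < q) :
    ∃ δ : ℝ, 0 < δ ∧ ∀ x ∈ Set.Icc (1/4 : ℝ) (3/4), δ ≤ Wf p q x := by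
  obtain ⟨x₀, hx₀, hmin⟩ := isCompact_Icc.exists_isMinOn (s := Set.Icc (1/4 : ℝ) (3/4))
    ⟨1/2, by norm_num⟩ ((Wf_cont p q hp hq).continuousOn)
  refine ⟨Wf p q x₀, ?_, fun x hx => hmin hx⟩
  have h1 : (0:ℝ) < x₀ := lt_of_lt_of_le (by norm_num) hx₀.1
  have h2 : (0:ℝ) < 1 - x₀ := by
    have := hx₀.2; linarith
  have ht : 0 < x₀ ^ p * (1 - x₀) ^ q :=
    mul_pos (Real.rpow_pos_of_pos h1 p) (Real.rpow_pos_of_pos h2 q)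
  exact mul_pos (inv_pos.2 (cpq_pos p q hp hq)) (expNegInvGlue.pos_of_pos ht)


lemma Apq_lower (p q : ℝ) (hp : 0 < p) (hq : 0 < q) {δ : ℝ} (hδ0 : 0 < δ)
    (hδ : ∀ x ∈ Set.Icc (1/4 : ℝ) (3/4), δ ≤ Wf p q x) :
    ∀ N : ℕ, 4 ≤ N → (N : ℝ) * (δ / 8) ≤ Apq p q N := by
  intro N hN4
  have hN0 : (0:ℝ) < N := by
    have : (4:ℝ) ≤ N := by exact_mod_cast hN4
    linarith
  set s : Finset ℕ := Finset.Icc ((N + 3) / 4) (3 * N / 4) with hs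
  have hsub : s ⊆ Finset.range N := by
    intro n hn
    rw [hs, Finset.mem_Icc] at hn
    rw [Finset.mem_range]
    omega
  have hcard : N ≤ 8 * s.card := by
    rw [hs, Nat.card_Icc]
    omega
  have hterm : ∀ n ∈ s, δ ≤ wpq p q ((n : ℝ) / N) := by
    intro n hn
    rw [hs, Finset.mem_Icc] at hn
    have h1 : N ≤ 4 * n := by omega
    have h2 : 4 * n ≤ 3 * N := by omega
    have h1R : (N:ℝ) ≤ 4 * n := by exact_mod_cast h1
    have h2R : (4:ℝ) * n ≤ 3 * N := by exact_mod_cast h2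
    have hx1 : (1/4 : ℝ) ≤ (n : ℝ) / N := by
      rw [le_div_iff₀ hN0]; linarith
    have hx2 : ((n : ℝ) / N) ≤ 3/4 := by
      rw [div_le_iff₀ hN0]; linarith
    have hIcc : (n : ℝ) / N ∈ Set.Icc (0:ℝ) 1 :=
      ⟨by linarith, by linarith⟩
    rw [wpq_eq_Wf p q hp hq hIcc]
    exact hδ _ ⟨hx1, hx2⟩
  have h1 : ∑ n ∈ s, wpq p q ((n : ℝ) / N) ≤ Apq p q N :=
    Finset.sum_le_sum_of_subset_of_nonneg hsub
      (fun n _ _ => wpq_nonneg p q hp hq _)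
  have h2 : (s.card : ℝ) * δ ≤ ∑ n ∈ s, wpq p q ((n : ℝ) / N) := by
    have := Finset.card_nsmul_le_sum s (fun n => wpq p q ((n : ℝ) / N)) δ hterm
    simpa [nsmul_eq_mul] using this
  have h3 : (N : ℝ) ≤ 8 * s.card := by exact_mod_cast hcard
  nlinarith [hδ0.le]


/-- If the Cesàro averages of a sequence in a Banach space converge to `a`, then the
`w_{p,q}`-weighted averages converge to `a` as well. -/
theorem weighted_average_tendsto_of_cesaro_tendsto
    {B : Type*} [NormedAddCommGroup B] [NormedSpace ℝ B] [CompleteSpace B]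
    (p q : ℝ) (hp : 0 < p) (hq : 0 < q) (a : ℕ → B) (L : B)
    (h : Tendsto (fun N : ℕ => (N : ℝ)⁻¹ • ∑ n ∈ Finset.Icc 1 N, a n) atTop (nhds L)) :
    Tendsto (fun N : ℕ =>
        (Apq p q N)⁻¹ • ∑ n ∈ Finset.Icc 1 N, wpq p q ((n : ℝ) / N) • a n)
      atTop (nhds L) := by
  obtain ⟨M, hM0, hMlip⟩ := Wf_lipschitz p q hp hq
  obtain ⟨δ, hδ0, hδmin⟩ := Wf_min p q hp hq
  have hApq_low := Apq_lower p q hp hq hδ0 hδmin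
  set S : ℕ → B := fun n => ∑ k ∈ Finset.Icc 1 n, a k with hSdef
  set cs : ℕ → B := fun n => (n : ℝ)⁻¹ • S n with hcsdef
  rw [NormedAddCommGroup.tendsto_atTop] at h ⊢
  intro ε hε
  set ε' : ℝ := ε * δ / (16 * (M + 1)) with hε'def
  have hε' : 0 < ε' := by positivity
  obtain ⟨n₀, hn₀⟩ := h ε' hε'
  set C₁ : ℝ := ∑ n ∈ Finset.Ioc 0 n₀, M * n * ‖cs n - L‖ with hC₁def
  have hC₁0 : 0 ≤ C₁ :=
    Finset.sum_nonneg fun n _ => by positivity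
  obtain ⟨N₁, hN₁⟩ := exists_nat_gt (16 * C₁ / (δ * ε) + 1)
  refine ⟨max (max N₁ n₀) 4, fun N hN => ?_⟩
  have hN4 : 4 ≤ N := le_trans (le_max_right _ _) hN
  have hNn₀ : n₀ ≤ N := le_trans (le_trans (le_max_right _ _) (le_max_left _ _)) hN
  have hNN₁ : N₁ ≤ N := le_trans (le_trans (le_max_left _ _) (le_max_left _ _)) hN
  have hN0 : (0:ℝ) < N := by
    have : (4:ℝ) ≤ N := by exact_mod_cast hN4
    linarith
  set f : ℕ → ℝ := fun n => wpq p q ((n : ℝ) / N) with hfdef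
  set d : ℕ → ℝ := fun n => f n - f (n + 1) with hddef
  have hftop : f (N + 1) = 0 := by
    apply wpq_zero_of_not_mem
    intro hmem
    have : (1:ℝ) < ((N:ℝ) + 1) / N := by
      rw [lt_div_iff₀ hN0]; linarith
    rw [Set.mem_Ioo] at hmem
    push_cast at hmem
    linarith [hmem.2]
  have hfN : f N = 0 := by
    have : ((N:ℝ)) / N = 1 := div_self hN0.ne'
    rw [hfdef]
    simp only [this]
    exact wpq_zero_of_not_mem p q (by simp)
  have hf0 : f 0 = 0 := by
    rw [hfdef]
    simp only [Nat.cast_zero, zero_div]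
    exact wpq_zero_of_not_mem p q (by simp)
  -- Abel identities
  have habel : ∑ n ∈ Finset.Icc 1 N, f n • a n = ∑ n ∈ Finset.Icc 1 N, d n • S n := by
    have := abel_sum f a N
    rw [hftop, zero_smul, add_zero] at this
    exact this
  have hsumIcc : Apq p q N = ∑ n ∈ Finset.Icc 1 N, f n := by
    have hins : Finset.range (N + 1) = insert 0 (Finset.Icc 1 N) := by
      ext k
      simp only [Finset.mem_range, Finset.mem_insert, Finset.mem_Icc]
      omega
    have h1 : ∑ n ∈ Finset.range (N + 1), f n = Apq p q N + f N := by
      rw [Finset.sum_range_succ]; rfl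
    have h2 : ∑ n ∈ Finset.range (N + 1), f n = f 0 + ∑ n ∈ Finset.Icc 1 N, f n := by
      rw [hins, Finset.sum_insert (by simp)]
    rw [hfN, add_zero] at h1
    rw [hf0, zero_add] at h2
    rw [← h1, h2]
  have habelA : Apq p q N = ∑ n ∈ Finset.Icc 1 N, d n * (n : ℝ) := by
    have h1 := abel_sum f (fun _ => (1:ℝ)) N
    have hconst : ∀ n : ℕ, ∑ _k ∈ Finset.Icc 1 n, (1:ℝ) = (n : ℝ) := by
      intro n
      rw [Finset.sum_const, Nat.card_Icc]
      simp
    simp only [smul_eq_mul, mul_one, hconst, hftop, zero_mul, add_zero] at h1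
    rw [hsumIcc, h1]
  -- bound on increments
  have hdb : ∀ n ∈ Finset.Icc 1 N, |d n| ≤ M / N := by
    intro n hn
    rw [Finset.mem_Icc] at hn
    by_cases hnN : n = N
    · have : d n = 0 := by
        rw [hddef]
        simp only [hnN]
        rw [hfN, hftop, sub_zero]
      rw [this, abs_zero]
      positivity
    · have hn1 : n + 1 ≤ N := by omega
      have hx : ((n:ℝ)) / N ∈ Set.Icc (0:ℝ) 1 := by
        constructor
        · positivity
        · rw [div_le_one hN0]
          exact_mod_cast hn.2
      have hy : (((n:ℝ) + 1)) / N ∈ Set.Icc (0:ℝ) 1 := by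
        constructor
        · positivity
        · rw [div_le_one hN0]
          exact_mod_cast hn1
      have hdiff : |(n:ℝ)/N - ((n:ℝ)+1)/N| = 1 / N := by
        rw [div_sub_div_same, abs_div, abs_of_pos hN0]
        norm_num
      have e1 : f n = Wf p q ((n:ℝ)/N) := wpq_eq_Wf p q hp hq hx
      have e2 : f (n + 1) = Wf p q (((n:ℝ)+1)/N) := by
        have hcast : (((n+1 : ℕ)):ℝ) = (n:ℝ) + 1 := by push_cast; ring
        calc f (n+1) = wpq p q ((((n+1:ℕ)):ℝ)/N) := rfl
          _ = wpq p q (((n:ℝ)+1)/N) := by rw [hcast]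
          _ = Wf p q (((n:ℝ)+1)/N) := wpq_eq_Wf p q hp hq hy
      have hdn : d n = Wf p q ((n:ℝ)/N) - Wf p q (((n:ℝ)+1)/N) := by
        rw [show d n = f n - f (n+1) from rfl, e1, e2]
      rw [hdn]
      calc |Wf p q ((n:ℝ)/N) - Wf p q (((n:ℝ)+1)/N)|
          ≤ M * |(n:ℝ)/N - ((n:ℝ)+1)/N| := hMlip _ hx _ hy
        _ = M / N := by rw [hdiff]; ring
  have hA : (0:ℝ) < Apq p q N := lt_of_lt_of_le (by positivity) (hApq_low N hN4)
  -- difference representation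
  have hrep : (Apq p q N)⁻¹ • (∑ n ∈ Finset.Icc 1 N, f n • a n) - L
      = (Apq p q N)⁻¹ • ∑ n ∈ Finset.Icc 1 N, (d n * n) • (cs n - L) := by
    have e1 : ∀ n ∈ Finset.Icc 1 N, (d n * n) • (cs n - L) = d n • S n - (d n * n) • L := by
      intro n hn
      rw [Finset.mem_Icc] at hn
      have hne : ((n:ℝ)) ≠ 0 := by
        have : 0 < n := hn.1
        positivity
      rw [smul_sub]
      congr 1
      rw [hcsdef]
      simp only
      rw [smul_smul, mul_assoc, mul_inv_cancel₀ hne, mul_one]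
    rw [Finset.sum_congr rfl e1, Finset.sum_sub_distrib, ← Finset.sum_smul, smul_sub,
      smul_smul, ← habelA, inv_mul_cancel₀ hA.ne', one_smul, habel]
  show ‖(Apq p q N)⁻¹ • (∑ n ∈ Finset.Icc 1 N, f n • a n) - L‖ < ε
  rw [hrep]
  -- norm estimates
  have hnorm1 : ‖∑ n ∈ Finset.Icc 1 N, (d n * n) • (cs n - L)‖
      ≤ ∑ n ∈ Finset.Icc 1 N, |d n| * n * ‖cs n - L‖ := by
    refine le_trans (norm_sum_le _ _) (Finset.sum_le_sum fun n hn => ?_)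
    rw [norm_smul, Real.norm_eq_abs, abs_mul, Nat.abs_cast]
  have hsplit : ∑ n ∈ Finset.Icc 1 N, |d n| * n * ‖cs n - L‖
      = (∑ n ∈ Finset.Ioc 0 n₀, |d n| * n * ‖cs n - L‖)
        + ∑ n ∈ Finset.Ioc n₀ N, |d n| * n * ‖cs n - L‖ := by
    have hIccIoc : Finset.Icc 1 N = Finset.Ioc 0 N := by
      ext k
      simp only [Finset.mem_Icc, Finset.mem_Ioc]
      omega
    rw [hIccIoc]
    exact (Finset.sum_Ioc_consecutive _ (Nat.zero_le n₀) hNn₀).symm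
  have hIoc_sub : ∀ n ∈ Finset.Ioc 0 n₀, n ∈ Finset.Icc 1 N := by
    intro n hn
    rw [Finset.mem_Ioc] at hn
    rw [Finset.mem_Icc]
    omega
  have hT1 : ∑ n ∈ Finset.Ioc 0 n₀, |d n| * n * ‖cs n - L‖ ≤ C₁ / N := by
    rw [hC₁def, Finset.sum_div]
    refine Finset.sum_le_sum fun n hn => ?_
    have h1 : |d n| ≤ M / N := hdb n (hIoc_sub n hn)
    have h2 : (0:ℝ) ≤ (n:ℝ) * ‖cs n - L‖ := by positivity
    calc |d n| * n * ‖cs n - L‖ = |d n| * ((n:ℝ) * ‖cs n - L‖) := by ring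
      _ ≤ (M / N) * ((n:ℝ) * ‖cs n - L‖) := mul_le_mul_of_nonneg_right h1 h2
      _ = M * n * ‖cs n - L‖ / N := by ring
  have hT2 : ∑ n ∈ Finset.Ioc n₀ N, |d n| * n * ‖cs n - L‖ ≤ (N:ℝ) * (M * ε') := by
    have step : ∀ n ∈ Finset.Ioc n₀ N, |d n| * n * ‖cs n - L‖ ≤ M * ε' := by
      intro n hn
      rw [Finset.mem_Ioc] at hn
      have h1 : |d n| ≤ M / N := hdb n (by rw [Finset.mem_Icc]; omega)
      have h2 : (n:ℝ) ≤ N := by exact_mod_cast hn.2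
      have h3 : ‖cs n - L‖ ≤ ε' := (hn₀ n (by omega)).le
      calc |d n| * n * ‖cs n - L‖
          ≤ (M / N) * n * ‖cs n - L‖ := by
            refine mul_le_mul_of_nonneg_right (mul_le_mul_of_nonneg_right h1 (by positivity)) ?_
            positivity
        _ ≤ (M / N) * N * ε' := by
            refine mul_le_mul ?_ h3 (norm_nonneg _) (by positivity)
            exact mul_le_mul_of_nonneg_left h2 (by positivity)
        _ = M * ε' := by field_simp
    calc ∑ n ∈ Finset.Ioc n₀ N, |d n| * n * ‖cs n - L‖
        ≤ ∑ _n ∈ Finset.Ioc n₀ N, M * ε' := Finset.sum_le_sum step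
      _ = (Finset.Ioc n₀ N).card * (M * ε') := by rw [Finset.sum_const, nsmul_eq_mul]
      _ ≤ (N:ℝ) * (M * ε') := by
          refine mul_le_mul_of_nonneg_right ?_ (by positivity)
          rw [Nat.card_Ioc]
          exact_mod_cast Nat.sub_le N n₀
  set R : ℝ := C₁ / N + (N:ℝ) * (M * ε') with hRdef
  have hR0 : 0 ≤ R := by positivity
  have hnormfull : ‖(Apq p q N)⁻¹ • ∑ n ∈ Finset.Icc 1 N, (d n * n) • (cs n - L)‖
      ≤ (Apq p q N)⁻¹ * R := by
    rw [norm_smul, Real.norm_eq_abs, abs_of_pos (inv_pos.2 hA)]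
    refine mul_le_mul_of_nonneg_left ?_ (by positivity)
    calc ‖∑ n ∈ Finset.Icc 1 N, (d n * n) • (cs n - L)‖
        ≤ ∑ n ∈ Finset.Icc 1 N, |d n| * n * ‖cs n - L‖ := hnorm1
      _ = _ + _ := hsplit
      _ ≤ R := add_le_add hT1 hT2
  refine lt_of_le_of_lt hnormfull ?_
  -- final arithmetic
  have hAinv : (Apq p q N)⁻¹ ≤ 8 / (δ * N) := by
    rw [div_eq_mul_inv]
    have h1 : (N:ℝ) * (δ / 8) ≤ Apq p q N := hApq_low N hN4
    have h2 : (0:ℝ) < (N:ℝ) * (δ / 8) := by positivity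
    calc (Apq p q N)⁻¹ ≤ ((N:ℝ) * (δ / 8))⁻¹ := by
          exact inv_anti₀ h2 h1
      _ = 8 * (δ * N)⁻¹ := by
          rw [mul_inv, mul_inv]
          field_simp
  have hfinal : (Apq p q N)⁻¹ * R ≤ (8 / (δ * N)) * R :=
    mul_le_mul_of_nonneg_right hAinv hR0
  refine lt_of_le_of_lt hfinal ?_
  -- show (8 / (δ * N)) * R < ε
  have hNbig : 16 * C₁ / (δ * ε) + 1 < (N:ℝ) := by
    have : (N₁:ℝ) ≤ N := by exact_mod_cast hNN₁
    linarith
  have hkey1 : 16 * C₁ < (N:ℝ) * (δ * ε) := by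
    have h' : 16 * C₁ / (δ * ε) < (N:ℝ) := by linarith
    rw [div_lt_iff₀ (by positivity)] at h'
    exact h'
  have hN1R : (1:ℝ) ≤ N := by exact_mod_cast (by omega : 1 ≤ N)
  -- C₁ / N ≤ C₁
  have hc1 : C₁ / N ≤ C₁ := by
    rw [div_le_iff₀ hN0]
    calc C₁ = C₁ * 1 := (mul_one C₁).symm
      _ ≤ C₁ * N := mul_le_mul_of_nonneg_left hN1R hC₁0
  have hterm2 : 8 * ((N:ℝ) * (M * ε')) ≤ (N:ℝ) * (δ * ε) / 2 := by
    have heq : 8 * ((N:ℝ) * (M * ε')) = (N:ℝ) * (δ * ε) / 2 * (M / (M + 1)) := by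
      rw [hε'def]
      field_simp
      ring
    have hMle : M / (M + 1) ≤ 1 := by
      rw [div_le_one (by positivity)]
      linarith
    rw [heq]
    calc (N:ℝ) * (δ * ε) / 2 * (M / (M + 1)) ≤ (N:ℝ) * (δ * ε) / 2 * 1 :=
          mul_le_mul_of_nonneg_left hMle (by positivity)
      _ = (N:ℝ) * (δ * ε) / 2 := by ring
  have hc1' : 8 * (C₁ / N) ≤ 8 * C₁ := by linarith
  have hRexp : 8 * R = 8 * (C₁ / N) + 8 * ((N:ℝ) * (M * ε')) := by rw [hRdef]; ring
  rw [div_mul_eq_mul_div, div_lt_iff₀ (by positivity : (0:ℝ) < δ * N)]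
  have hfin : 8 * R < ε * (δ * N) := by
    have e : ε * (δ * (N:ℝ)) = (N:ℝ) * (δ * ε) := by ring
    rw [hRexp, e]
    linarith [hkey1, hterm2, hc1']
  linarith
end

section
/- Let p, q > 0 and let (X_n)_{n≥1} be independent and identically distributed real-valued random variables on a probability space, with X₁ integrable. Then for every ε > 0, P(|(A_N^{p,q})^{-1}·∑_{n=1}^{N} w_{p,q}(n/N)·X_n − (A_N^{p,q})^{-1}·∑_{n=1}^{N} w_{p,q}(n/N)·E[X_n]| < ε) → 1 as N → ∞ (weighted Khinchin law of large numbers). -/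
open MeasureTheory Filter ProbabilityTheory
open scoped Nat Topology

namespace WKAux

noncomputable def gpq (p q x : ℝ) : ℝ := Real.exp (-(x ^ (-p) * (1 - x) ^ (-q)))

noncomputable def fpq (p q x : ℝ) : ℝ := if x ∈ Set.Ioo (0:ℝ) 1 then gpq p q x else 0

noncomputable def cpq (p q : ℝ) : ℝ := ∫ s in (0:ℝ)..1, Real.exp (-(s ^ (-p) * (1 - s) ^ (-q)))

lemma wpq_eq (p q x : ℝ) : wpq p q x = (cpq p q)⁻¹ * fpq p q x := by
  unfold wpq fpq cpq gpq
  split <;> simp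

lemma rpow_fact_bound {t a : ℝ} {n : ℕ} (ht : 1 ≤ t) (han : a ≤ n) :
    t ^ a * Real.exp (-t) ≤ n ! := by
  have ht0 : (0:ℝ) ≤ t := le_trans zero_le_one ht
  have h1 : t ^ a ≤ t ^ (n:ℝ) := Real.rpow_le_rpow_of_exponent_le ht han
  have h2 : t ^ (n:ℝ) = t ^ n := Real.rpow_natCast t n
  have h3 : t ^ n ≤ n ! * Real.exp t := by
    have := Real.sum_le_exp_of_nonneg ht0 (n+1)
    have hsingle : t ^ n / n ! ≤ ∑ i ∈ Finset.range (n+1), t ^ i / i ! := by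
      apply Finset.single_le_sum (f := fun i => t ^ i / (i ! : ℝ))
      · intro i _
        positivity
      · simp
    have : t ^ n / n ! ≤ Real.exp t := hsingle.trans this
    rw [div_le_iff₀ (by positivity)] at this
    linarith [this]
  calc t ^ a * Real.exp (-t) ≤ t ^ n * Real.exp (-t) := by
        rw [← h2]; exact mul_le_mul_of_nonneg_right h1 (Real.exp_pos _).le
    _ ≤ (n ! * Real.exp t) * Real.exp (-t) := mul_le_mul_of_nonneg_right h3 (Real.exp_pos _).le
    _ = n ! := by rw [mul_assoc, ← Real.exp_add]; simp

section Basic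

variable {p q x : ℝ} (hp : 0 < p) (hq : 0 < q) (hx : x ∈ Set.Ioo (0:ℝ) 1)

include hp hq hx

lemma one_le_t : 1 ≤ x ^ (-p) * (1 - x) ^ (-q) := by
  obtain ⟨hx0, hx1⟩ := hx
  have h1 : 1 ≤ x ^ (-p) :=
    Real.one_le_rpow_of_pos_of_le_one_of_nonpos hx0 hx1.le (by linarith)
  have h2 : 1 ≤ (1 - x) ^ (-q) :=
    Real.one_le_rpow_of_pos_of_le_one_of_nonpos (by linarith) (by linarith) (by linarith)
  nlinarith

lemma xp_le_t : x ^ (-p) ≤ x ^ (-p) * (1 - x) ^ (-q) := by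
  obtain ⟨hx0, hx1⟩ := hx
  have h2 : 1 ≤ (1 - x) ^ (-q) :=
    Real.one_le_rpow_of_pos_of_le_one_of_nonpos (by linarith) (by linarith) (by linarith)
  have := (Real.rpow_pos_of_pos hx0 (-p)).le
  nlinarith

lemma xq_le_t : (1 - x) ^ (-q) ≤ x ^ (-p) * (1 - x) ^ (-q) := by
  obtain ⟨hx0, hx1⟩ := hx
  have h1 : 1 ≤ x ^ (-p) :=
    Real.one_le_rpow_of_pos_of_le_one_of_nonpos hx0 hx1.le (by linarith)
  have := (Real.rpow_pos_of_pos (show (0:ℝ) < 1 - x by linarith) (-q)).le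
  nlinarith

lemma inv_le_t_rpow : x⁻¹ ≤ (x ^ (-p) * (1 - x) ^ (-q)) ^ p⁻¹ := by
  have hx0 := hx.1
  have h1 : (x ^ (-p)) ^ p⁻¹ = x⁻¹ := by
    rw [← Real.rpow_mul hx0.le, neg_mul, mul_inv_cancel₀ hp.ne', Real.rpow_neg_one]
  rw [← h1]
  exact Real.rpow_le_rpow (Real.rpow_nonneg hx0.le _) (xp_le_t hp hq hx) (inv_nonneg.2 hp.le)

omit hp hq hx in
lemma hinv_le_t_rpow (hp : 0 < p) (hq : 0 < q) (hx : x ∈ Set.Ioo (0:ℝ) 1) :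
    (1 - x)⁻¹ ≤ (x ^ (-p) * (1 - x) ^ (-q)) ^ q⁻¹ := by
  have h1x : (0:ℝ) < 1 - x := by have := hx.2; linarith
  have h1 : ((1 - x) ^ (-q)) ^ q⁻¹ = (1 - x)⁻¹ := by
    rw [← Real.rpow_mul h1x.le, neg_mul, mul_inv_cancel₀ hq.ne', Real.rpow_neg_one]
  rw [← h1]
  exact Real.rpow_le_rpow (Real.rpow_nonneg h1x.le _) (xq_le_t hp hq hx) (inv_nonneg.2 hq.le)

end Basic


noncomputable def Kpq (p q : ℝ) : ℝ :=
  (p + 1) * (⌈p⁻¹⌉₊ + 2)! + (q + 1) * (⌈q⁻¹⌉₊ + 2)!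

noncomputable def gpq' (p q x : ℝ) : ℝ :=
  gpq p q x * (p * x ^ (-p - 1) * (1 - x) ^ (-q) - q * x ^ (-p) * (1 - x) ^ (-q - 1))

lemma hasDerivAt_gpq {p q x : ℝ} (hx : x ∈ Set.Ioo (0:ℝ) 1) :
    HasDerivAt (gpq p q) (gpq' p q x) x := by
  obtain ⟨hx0, hx1⟩ := hx
  have h1x : (0:ℝ) < 1 - x := by linarith
  have hu : HasDerivAt (fun y : ℝ => y ^ (-p)) (-p * x ^ (-p - 1)) x :=
    Real.hasDerivAt_rpow_const (Or.inl hx0.ne')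
  have hv0 : HasDerivAt (fun y : ℝ => 1 - y) (-1) x := (hasDerivAt_id x).const_sub 1
  have hv : HasDerivAt (fun y : ℝ => (1 - y) ^ (-q)) ((-1) * (-q) * (1 - x) ^ (-q - 1)) x :=
    hv0.rpow_const (Or.inl h1x.ne')
  have hw := (hu.mul hv).neg
  have hg := hw.exp
  convert hg using 1
  show gpq' p q x = _
  unfold gpq' gpq
  simp only [Pi.neg_apply, Pi.mul_apply]
  ring
  · funext y; rfl

lemma gpq'_bound {p q x : ℝ} (hp : 0 < p) (hq : 0 < q) (hx : x ∈ Set.Ioo (0:ℝ) 1) :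
    |gpq' p q x| ≤ Kpq p q := by
  obtain ⟨hx0, hx1⟩ := hx
  have h1x : (0:ℝ) < 1 - x := by linarith
  set t := x ^ (-p) * (1 - x) ^ (-q) with ht_def
  have ht1 : 1 ≤ t := one_le_t hp hq ⟨hx0, hx1⟩
  have ht0 : (0:ℝ) < t := lt_of_lt_of_le zero_lt_one ht1
  -- first term
  have hsplit : x ^ (-p - 1) = x ^ (-p) * x⁻¹ := by
    rw [show -p - 1 = -p + -1 by ring, Real.rpow_add hx0, Real.rpow_neg_one]
  have hsplit' : (1 - x) ^ (-q - 1) = (1 - x) ^ (-q) * (1 - x)⁻¹ := by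
    rw [show -q - 1 = -q + -1 by ring, Real.rpow_add h1x, Real.rpow_neg_one]
  have hb1 : x ^ (-p - 1) * (1 - x) ^ (-q) * Real.exp (-t) ≤ ((⌈p⁻¹⌉₊ + 2)! : ℝ) := by
    have h1 : x ^ (-p - 1) * (1 - x) ^ (-q) ≤ t ^ ((1:ℝ) + p⁻¹) := by
      have hxx : x⁻¹ ≤ t ^ p⁻¹ := inv_le_t_rpow hp hq ⟨hx0, hx1⟩
      have : x ^ (-p - 1) * (1 - x) ^ (-q) = t * x⁻¹ := by rw [hsplit]; ring
      rw [this, Real.rpow_add ht0, Real.rpow_one]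
      exact mul_le_mul_of_nonneg_left hxx ht0.le
    have h2 : t ^ ((1:ℝ) + p⁻¹) * Real.exp (-t) ≤ ((⌈p⁻¹⌉₊ + 2)! : ℝ) := by
      apply rpow_fact_bound ht1
      push_cast
      have := Nat.le_ceil p⁻¹
      linarith
    calc x ^ (-p - 1) * (1 - x) ^ (-q) * Real.exp (-t)
        ≤ t ^ ((1:ℝ) + p⁻¹) * Real.exp (-t) :=
          mul_le_mul_of_nonneg_right h1 (Real.exp_pos _).le
      _ ≤ _ := h2
  have hb2 : x ^ (-p) * (1 - x) ^ (-q - 1) * Real.exp (-t) ≤ ((⌈q⁻¹⌉₊ + 2)! : ℝ) := by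
    have h1 : x ^ (-p) * (1 - x) ^ (-q - 1) ≤ t ^ ((1:ℝ) + q⁻¹) := by
      have hxx : (1 - x)⁻¹ ≤ t ^ q⁻¹ := hinv_le_t_rpow hp hq ⟨hx0, hx1⟩
      have : x ^ (-p) * (1 - x) ^ (-q - 1) = t * (1 - x)⁻¹ := by rw [hsplit']; ring
      rw [this, Real.rpow_add ht0, Real.rpow_one]
      exact mul_le_mul_of_nonneg_left hxx ht0.le
    have h2 : t ^ ((1:ℝ) + q⁻¹) * Real.exp (-t) ≤ ((⌈q⁻¹⌉₊ + 2)! : ℝ) := by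
      apply rpow_fact_bound ht1
      push_cast
      have := Nat.le_ceil q⁻¹
      linarith
    calc x ^ (-p) * (1 - x) ^ (-q - 1) * Real.exp (-t)
        ≤ t ^ ((1:ℝ) + q⁻¹) * Real.exp (-t) :=
          mul_le_mul_of_nonneg_right h1 (Real.exp_pos _).le
      _ ≤ _ := h2
  have hgx : gpq p q x = Real.exp (-t) := rfl
  have e1 : (0:ℝ) ≤ x ^ (-p - 1) * (1 - x) ^ (-q) :=
    mul_nonneg (Real.rpow_nonneg hx0.le _) (Real.rpow_nonneg h1x.le _)
  have e2 : (0:ℝ) ≤ x ^ (-p) * (1 - x) ^ (-q - 1) :=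
    mul_nonneg (Real.rpow_nonneg hx0.le _) (Real.rpow_nonneg h1x.le _)
  have hexp : (0:ℝ) < Real.exp (-t) := Real.exp_pos _
  have hfac1 : (0:ℝ) ≤ ((⌈p⁻¹⌉₊ + 2)! : ℝ) := by positivity
  have hfac2 : (0:ℝ) ≤ ((⌈q⁻¹⌉₊ + 2)! : ℝ) := by positivity
  unfold gpq' Kpq
  rw [hgx]
  have habs : |Real.exp (-t) * (p * x ^ (-p - 1) * (1 - x) ^ (-q)
      - q * (x ^ (-p)) * (1 - x) ^ (-q - 1))|
      ≤ Real.exp (-t) * (p * x ^ (-p - 1) * (1 - x) ^ (-q))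
        + Real.exp (-t) * (q * (x ^ (-p)) * (1 - x) ^ (-q - 1)) := by
    rw [mul_sub]
    refine (abs_sub _ _).trans ?_
    rw [abs_of_nonneg (by positivity), abs_of_nonneg (by positivity)]
  refine habs.trans ?_
  have c1 : Real.exp (-t) * (p * x ^ (-p - 1) * (1 - x) ^ (-q)) ≤ (p+1) * ((⌈p⁻¹⌉₊ + 2)! : ℝ) := by
    have : Real.exp (-t) * (p * x ^ (-p - 1) * (1 - x) ^ (-q))
        = p * (x ^ (-p - 1) * (1 - x) ^ (-q) * Real.exp (-t)) := by ring
    rw [this]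
    have := mul_le_mul_of_nonneg_left hb1 hp.le
    nlinarith
  have c2 : Real.exp (-t) * (q * (x ^ (-p)) * (1 - x) ^ (-q - 1)) ≤ (q+1) * ((⌈q⁻¹⌉₊ + 2)! : ℝ) := by
    have : Real.exp (-t) * (q * (x ^ (-p)) * (1 - x) ^ (-q - 1))
        = q * (x ^ (-p) * (1 - x) ^ (-q - 1) * Real.exp (-t)) := by ring
    rw [this]
    have := mul_le_mul_of_nonneg_left hb2 hq.le
    nlinarith
  linarith

lemma gpq_le_left {p q x : ℝ} (hp : 0 < p) (hq : 0 < q) (hx : x ∈ Set.Ioo (0:ℝ) 1) :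
    gpq p q x ≤ Kpq p q * x := by
  obtain ⟨hx0, hx1⟩ := hx
  set t := x ^ (-p) * (1 - x) ^ (-q) with ht_def
  have ht1 : 1 ≤ t := one_le_t hp hq ⟨hx0, hx1⟩
  have ht0 : (0:ℝ) < t := lt_of_lt_of_le zero_lt_one ht1
  have hxx : x⁻¹ ≤ t ^ p⁻¹ := inv_le_t_rpow hp hq ⟨hx0, hx1⟩
  have h1 : t ^ (p⁻¹ : ℝ) * Real.exp (-t) ≤ ((⌈p⁻¹⌉₊ + 2)! : ℝ) := by
    apply rpow_fact_bound ht1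
    push_cast
    have := Nat.le_ceil p⁻¹
    linarith
  have hKf : ((⌈p⁻¹⌉₊ + 2)! : ℝ) ≤ Kpq p q := by
    unfold Kpq
    have hfac2 : (0:ℝ) ≤ ((⌈q⁻¹⌉₊ + 2)! : ℝ) := by positivity
    have hfac1 : (0:ℝ) ≤ ((⌈p⁻¹⌉₊ + 2)! : ℝ) := by positivity
    nlinarith
  have hgx : gpq p q x = Real.exp (-t) := rfl
  rw [hgx]
  -- exp(-t) * x⁻¹ ≤ exp(-t) * t^{1/p} ≤ (…)!
  have key : Real.exp (-t) * x⁻¹ ≤ Kpq p q := by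
    calc Real.exp (-t) * x⁻¹ ≤ Real.exp (-t) * t ^ (p⁻¹ : ℝ) :=
          mul_le_mul_of_nonneg_left hxx (Real.exp_pos _).le
      _ = t ^ (p⁻¹ : ℝ) * Real.exp (-t) := by ring
      _ ≤ ((⌈p⁻¹⌉₊ + 2)! : ℝ) := h1
      _ ≤ Kpq p q := hKf
  have := mul_le_mul_of_nonneg_right key hx0.le
  rw [mul_assoc, inv_mul_cancel₀ hx0.ne', mul_one] at this
  linarith

lemma gpq_le_right {p q x : ℝ} (hp : 0 < p) (hq : 0 < q) (hx : x ∈ Set.Ioo (0:ℝ) 1) :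
    gpq p q x ≤ Kpq p q * (1 - x) := by
  obtain ⟨hx0, hx1⟩ := hx
  have h1x : (0:ℝ) < 1 - x := by linarith
  set t := x ^ (-p) * (1 - x) ^ (-q) with ht_def
  have ht1 : 1 ≤ t := one_le_t hp hq ⟨hx0, hx1⟩
  have hxx : (1 - x)⁻¹ ≤ t ^ q⁻¹ := hinv_le_t_rpow hp hq ⟨hx0, hx1⟩
  have h1 : t ^ (q⁻¹ : ℝ) * Real.exp (-t) ≤ ((⌈q⁻¹⌉₊ + 2)! : ℝ) := by
    apply rpow_fact_bound ht1
    push_cast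
    have := Nat.le_ceil q⁻¹
    linarith
  have hKf : ((⌈q⁻¹⌉₊ + 2)! : ℝ) ≤ Kpq p q := by
    unfold Kpq
    have hfac2 : (0:ℝ) ≤ ((⌈q⁻¹⌉₊ + 2)! : ℝ) := by positivity
    have hfac1 : (0:ℝ) ≤ ((⌈p⁻¹⌉₊ + 2)! : ℝ) := by positivity
    nlinarith
  have hgx : gpq p q x = Real.exp (-t) := rfl
  rw [hgx]
  have key : Real.exp (-t) * (1 - x)⁻¹ ≤ Kpq p q := by
    calc Real.exp (-t) * (1 - x)⁻¹ ≤ Real.exp (-t) * t ^ (q⁻¹ : ℝ) :=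
          mul_le_mul_of_nonneg_left hxx (Real.exp_pos _).le
      _ = t ^ (q⁻¹ : ℝ) * Real.exp (-t) := by ring
      _ ≤ ((⌈q⁻¹⌉₊ + 2)! : ℝ) := h1
      _ ≤ Kpq p q := hKf
  have := mul_le_mul_of_nonneg_right key h1x.le
  rw [mul_assoc, inv_mul_cancel₀ h1x.ne', mul_one] at this
  linarith

lemma Kpq_nonneg {p q : ℝ} (hp : 0 < p) (hq : 0 < q) : 0 ≤ Kpq p q := by
  unfold Kpq
  have hfac2 : (0:ℝ) ≤ ((⌈q⁻¹⌉₊ + 2)! : ℝ) := by positivity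
  have hfac1 : (0:ℝ) ≤ ((⌈p⁻¹⌉₊ + 2)! : ℝ) := by positivity
  nlinarith

lemma fpq_lipschitz {p q : ℝ} (hp : 0 < p) (hq : 0 < q) :
    ∀ x ∈ Set.Icc (0:ℝ) 1, ∀ y ∈ Set.Icc (0:ℝ) 1,
      |fpq p q x - fpq p q y| ≤ Kpq p q * |x - y| := by
  have hK := Kpq_nonneg hp hq
  -- the in-in case via MVT
  have main : ∀ x ∈ Set.Ioo (0:ℝ) 1, ∀ y ∈ Set.Ioo (0:ℝ) 1,
      |gpq p q x - gpq p q y| ≤ Kpq p q * |x - y| := by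
    intro x hx y hy
    have := (convex_Ioo (0:ℝ) 1).norm_image_sub_le_of_norm_hasDerivWithin_le
      (f := gpq p q) (f' := gpq' p q) (C := Kpq p q)
      (fun z hz => (hasDerivAt_gpq hz).hasDerivWithinAt)
      (fun z hz => by rw [Real.norm_eq_abs]; exact gpq'_bound hp hq hz) hy hx
    simpa [Real.norm_eq_abs] using this
  -- endpoint bound
  have hep : ∀ x ∈ Set.Icc (0:ℝ) 1, x ∉ Set.Ioo (0:ℝ) 1 → ∀ y ∈ Set.Icc (0:ℝ) 1,
      |fpq p q x - fpq p q y| ≤ Kpq p q * |x - y| := by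
    intro x hx hx' y hy
    have hfx : fpq p q x = 0 := by unfold fpq; rw [if_neg hx']
    by_cases hy' : y ∈ Set.Ioo (0:ℝ) 1
    · have hfy : fpq p q y = gpq p q y := by unfold fpq; exact if_pos hy'
      have hgy0 : 0 < gpq p q y := Real.exp_pos _
      rw [hfx, hfy, zero_sub, abs_neg, abs_of_pos hgy0]
      have hx01 : x = 0 ∨ x = 1 := by
        rcases hx with ⟨h0, h1⟩
        simp only [Set.mem_Ioo, not_and, not_lt] at hx'
        rcases lt_or_eq_of_le h0 with h | h
        · right; linarith [hx' h]
        · left; exact h.symm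
      rcases hx01 with rfl | rfl
      · have := gpq_le_left hp hq hy'
        rw [abs_of_nonpos (by linarith [hy'.1])]
        linarith [this]
      · have := gpq_le_right hp hq hy'
        rw [abs_of_nonneg (by linarith [hy'.2])]
        linarith [this]
    · have hfy : fpq p q y = 0 := by unfold fpq; rw [if_neg hy']
      rw [hfx, hfy, sub_zero, abs_zero]
      positivity
  intro x hx y hy
  by_cases hx' : x ∈ Set.Ioo (0:ℝ) 1
  · by_cases hy' : y ∈ Set.Ioo (0:ℝ) 1
    · have hfx : fpq p q x = gpq p q x := if_pos hx'
      have hfy : fpq p q y = gpq p q y := if_pos hy'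
      rw [hfx, hfy]; exact main x hx' y hy'
    · rw [abs_sub_comm, abs_sub_comm x y]
      exact hep y hy hy' x hx
  · exact hep x hx hx' y hy

lemma cpq_pos {p q : ℝ} (hp : 0 < p) (hq : 0 < q) : 0 < cpq p q := by
  unfold cpq
  apply intervalIntegral.intervalIntegral_pos_of_pos_on
  · -- interval integrable
    rw [intervalIntegrable_iff_integrableOn_Ioo_of_le zero_le_one]
    have hcont : ContinuousOn (fun s : ℝ => Real.exp (-(s ^ (-p) * (1 - s) ^ (-q))))
        (Set.Ioo (0:ℝ) 1) := by
      apply Real.continuous_exp.comp_continuousOn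
      apply ContinuousOn.neg
      apply ContinuousOn.mul
      · exact continuousOn_id.rpow_const (fun x hx => Or.inl hx.1.ne')
      · exact (continuousOn_const.sub continuousOn_id).rpow_const
          (fun x hx => Or.inl (by have := hx.2; intro h; simp at h; linarith))
    apply Integrable.mono' (integrable_const (1:ℝ))
      (hcont.aestronglyMeasurable measurableSet_Ioo)
    rw [ae_restrict_iff' measurableSet_Ioo]
    refine Filter.Eventually.of_forall (fun s hs => ?_)
    rw [Real.norm_eq_abs, Real.abs_exp]
    rw [Real.exp_le_one_iff]
    have h1 : (0:ℝ) ≤ s ^ (-p) := Real.rpow_nonneg hs.1.le _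
    have h2 : (0:ℝ) ≤ (1 - s) ^ (-q) := Real.rpow_nonneg (by linarith [hs.2]) _
    nlinarith
  · intro s hs
    exact Real.exp_pos _
  · norm_num

noncomputable def gmin (p q : ℝ) : ℝ := Real.exp (-((4:ℝ) ^ p * 4 ^ q))

lemma gmin_pos (p q : ℝ) : 0 < gmin p q := Real.exp_pos _

lemma gpq_ge_mid {p q x : ℝ} (hp : 0 < p) (hq : 0 < q)
    (hx : x ∈ Set.Icc (4⁻¹:ℝ) (2⁻¹:ℝ)) : gmin p q ≤ gpq p q x := by
  obtain ⟨hx0, hx1⟩ := hx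
  have hx0' : (0:ℝ) < x := by linarith
  have h1x : (0:ℝ) < 1 - x := by linarith
  unfold gpq gmin
  rw [Real.exp_le_exp, neg_le_neg_iff]
  have e1 : x ^ (-p) ≤ (4:ℝ) ^ p := by
    rw [Real.rpow_neg hx0'.le, ← Real.inv_rpow hx0'.le]
    apply Real.rpow_le_rpow (by positivity) _ hp.le
    rw [inv_le_comm₀ hx0' (by norm_num : (0:ℝ) < 4)]
    linarith
  have e2 : (1 - x) ^ (-q) ≤ (4:ℝ) ^ q := by
    rw [Real.rpow_neg h1x.le, ← Real.inv_rpow h1x.le]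
    apply Real.rpow_le_rpow (by positivity) _ hq.le
    rw [inv_le_comm₀ h1x (by norm_num : (0:ℝ) < 4)]
    linarith
  have f1 : (0:ℝ) ≤ x ^ (-p) := Real.rpow_nonneg hx0'.le _
  have f2 : (0:ℝ) ≤ (1 - x) ^ (-q) := Real.rpow_nonneg h1x.le _
  have g1 : (0:ℝ) < (4:ℝ) ^ p := Real.rpow_pos_of_pos (by norm_num) _
  nlinarith

lemma fpq_nonneg (p q x : ℝ) : 0 ≤ fpq p q x := by
  unfold fpq
  split
  · exact (Real.exp_pos _).le
  · exact le_refl 0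

noncomputable def alphapq (p q : ℝ) : ℝ := (cpq p q)⁻¹ * gmin p q / 8

lemma alphapq_pos {p q : ℝ} (hp : 0 < p) (hq : 0 < q) : 0 < alphapq p q := by
  unfold alphapq
  have := cpq_pos hp hq
  have := gmin_pos p q
  positivity

lemma Apq_lb {p q : ℝ} (hp : 0 < p) (hq : 0 < q) {N : ℕ} (hN : 8 ≤ N) :
    alphapq p q * N ≤ Apq p q N := by
  have hc := cpq_pos hp hq
  have hgm := gmin_pos p q
  have hN0 : (0:ℝ) < N := by positivity
  -- Apq = cpq⁻¹ * ∑ fpq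
  have hA : Apq p q N = (cpq p q)⁻¹ * ∑ n ∈ Finset.range N, fpq p q ((n : ℝ) / N) := by
    unfold Apq
    rw [Finset.mul_sum]
    exact Finset.sum_congr rfl (fun n _ => wpq_eq p q _)
  set T : Finset ℕ := Finset.Icc (N / 4 + 1) (N / 2) with hT
  have hsub : T ⊆ Finset.range N := by
    intro n hn
    rw [Finset.mem_Icc] at hn
    rw [Finset.mem_range]
    omega
  have hbound : ∀ n ∈ T, gmin p q ≤ fpq p q ((n : ℝ) / N) := by
    intro n hn
    rw [Finset.mem_Icc] at hn
    have h4 : (4:ℝ) * n ≥ N := by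
      have : 4 * n ≥ N := by omega
      exact_mod_cast this
    have h2 : (2:ℝ) * n ≤ N := by
      have : 2 * n ≤ N := by omega
      exact_mod_cast this
    have hn0 : (0:ℝ) < n := by
      have : 0 < n := by omega
      exact_mod_cast this
    have hmem : (n : ℝ) / N ∈ Set.Icc (4⁻¹:ℝ) (2⁻¹:ℝ) := by
      constructor
      · rw [le_div_iff₀ hN0]
        linarith
      · rw [div_le_iff₀ hN0]
        linarith
    have hIoo : (n : ℝ) / N ∈ Set.Ioo (0:ℝ) 1 := by
      constructor
      · positivity
      · rw [div_lt_one hN0]; linarith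
    have : fpq p q ((n : ℝ) / N) = gpq p q ((n : ℝ) / N) := if_pos hIoo
    rw [this]
    exact gpq_ge_mid hp hq hmem
  have hcardn : N ≤ 8 * T.card := by
    rw [hT, Nat.card_Icc]
    omega
  have hcard : (N : ℝ) / 8 ≤ T.card := by
    have : (N:ℝ) ≤ 8 * T.card := by exact_mod_cast hcardn
    linarith
  have hsum : gmin p q * T.card ≤ ∑ n ∈ Finset.range N, fpq p q ((n : ℝ) / N) := by
    calc gmin p q * T.card = ∑ _n ∈ T, gmin p q := by
          rw [Finset.sum_const, nsmul_eq_mul]; ring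
      _ ≤ ∑ n ∈ T, fpq p q ((n : ℝ) / N) := Finset.sum_le_sum hbound
      _ ≤ ∑ n ∈ Finset.range N, fpq p q ((n : ℝ) / N) :=
          Finset.sum_le_sum_of_subset_of_nonneg hsub (fun n _ _ => fpq_nonneg p q _)
  rw [hA]
  unfold alphapq
  have step : gmin p q * ((N:ℝ)/8) ≤ gmin p q * T.card :=
    mul_le_mul_of_nonneg_left hcard hgm.le
  have : (cpq p q)⁻¹ * (gmin p q * ((N:ℝ)/8)) ≤ (cpq p q)⁻¹ * ∑ n ∈ Finset.range N, fpq p q ((n : ℝ) / N) := by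
    apply mul_le_mul_of_nonneg_left _ (by positivity)
    exact step.trans hsum
  calc (cpq p q)⁻¹ * gmin p q / 8 * N = (cpq p q)⁻¹ * (gmin p q * ((N:ℝ)/8)) := by ring
    _ ≤ _ := this

noncomputable def Fw (p q : ℝ) (N : ℕ) (i : ℕ) : ℝ := wpq p q (((i + 1 : ℕ) : ℝ) / N)

lemma key {p q : ℝ} (hp : 0 < p) (hq : 0 < q) {x : ℕ → ℝ} {m : ℝ}
    (hx : Tendsto (fun n : ℕ => (∑ i ∈ Finset.range n, x (i + 1)) / n) atTop (𝓝 m)) :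
    Tendsto (fun N : ℕ => (Apq p q N)⁻¹ * ∑ n ∈ Finset.Icc 1 N, wpq p q ((n : ℝ) / N) * x n)
      atTop (𝓝 m) := by
  have hc := cpq_pos hp hq
  have hα := alphapq_pos hp hq
  have hK := Kpq_nonneg hp hq
  set KL : ℝ := (cpq p q)⁻¹ * Kpq p q with hKL
  have hKL0 : 0 ≤ KL := by positivity
  set C : ℝ := (alphapq p q)⁻¹ * KL with hC
  have hC0 : 0 ≤ C := by positivity
  set S : ℕ → ℝ := fun k => ∑ i ∈ Finset.range k, x (i + 1) with hS
  set u : ℕ → ℝ := fun k => |S (k + 1) - ((k : ℝ) + 1) * m| / ((k : ℝ) + 1) with hu_def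
  have hu0 : ∀ k, 0 ≤ u k := fun k => by rw [hu_def]; positivity
  have hu : Tendsto u atTop (𝓝 0) := by
    have h1 : Tendsto (fun n : ℕ => |S n / n - m|) atTop (𝓝 0) := by
      have h := hx.sub_const m
      rw [sub_self] at h
      have h2 := h.abs
      rwa [abs_zero] at h2
    have h2 := h1.comp (tendsto_add_atTop_nat 1)
    apply h2.congr
    intro k
    show |S (k + 1) / ((k + 1 : ℕ) : ℝ) - m| = u k
    have hk1 : (0:ℝ) < (k : ℝ) + 1 := by positivity
    rw [hu_def]
    push_cast
    have heq : S (k + 1) / ((k:ℝ) + 1) - m = (S (k + 1) - ((k:ℝ) + 1) * m) / ((k:ℝ) + 1) := by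
      field_simp
    rw [heq, abs_div, abs_of_pos hk1]
  set V : ℕ → ℝ := fun n => (n : ℝ)⁻¹ * ∑ k ∈ Finset.range n, u k with hV_def
  have hV : Tendsto V atTop (𝓝 0) := hu.cesaro
  -- main quantitative bound
  have bound : ∀ N : ℕ, 8 ≤ N →
      |(Apq p q N)⁻¹ * (∑ n ∈ Finset.Icc 1 N, wpq p q ((n : ℝ) / N) * x n) - m|
        ≤ C * V (N - 1) := by
    intro N hN
    have hNR : (0:ℝ) < N := by
      have : 0 < N := by omega
      exact_mod_cast this
    have hA_lb := Apq_lb hp hq hN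
    have hApos : 0 < Apq p q N := lt_of_lt_of_le (by positivity) hA_lb
    have hw1 : wpq p q ((N : ℝ) / N) = 0 := by
      rw [div_self hNR.ne']
      unfold wpq
      rw [if_neg (by simp)]
    have hw0 : wpq p q (((0:ℕ) : ℝ) / N) = 0 := by
      rw [Nat.cast_zero, zero_div]
      unfold wpq
      rw [if_neg (by simp)]
    have hNm1 : N - 1 + 1 = N := by omega
    have hFN : Fw p q N (N - 1) = 0 := by
      unfold Fw
      rw [hNm1]
      exact hw1
    -- reindex the Icc sum
    have hIcc : ∑ n ∈ Finset.Icc 1 N, wpq p q ((n : ℝ) / N) * x n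
        = ∑ i ∈ Finset.range N, Fw p q N i * x (i + 1) := by
      rw [← Finset.Ico_add_one_right_eq_Icc, Finset.sum_Ico_eq_sum_range]
      refine Finset.sum_congr (by norm_num) (fun i _ => ?_)
      rw [add_comm 1 i]
      rfl
    -- the shifted weights sum to Apq
    have hA' : ∑ i ∈ Finset.range N, Fw p q N i = Apq p q N := by
      have h1 := Finset.sum_range_succ' (fun n : ℕ => wpq p q ((n : ℝ) / N)) N
      have h2 := Finset.sum_range_succ (fun n : ℕ => wpq p q ((n : ℝ) / N)) N
      rw [hw0] at h1
      rw [hw1] at h2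
      unfold Fw Apq
      rw [add_zero] at h1 h2
      rw [← h1, h2]
    -- Abel summation
    have hab1 := Finset.sum_range_by_parts (Fw p q N) (fun i => x (i + 1)) N
    have hab2 := Finset.sum_range_by_parts (Fw p q N) (fun _ => (1:ℝ)) N
    simp only [smul_eq_mul, mul_one, Finset.sum_const, Finset.card_range,
      nsmul_eq_mul] at hab1 hab2
    rw [hFN, zero_mul, zero_sub] at hab1 hab2
    have hD : ∑ i ∈ Finset.range N, Fw p q N i * x (i + 1)
        = ∑ i ∈ Finset.range (N - 1), (Fw p q N i - Fw p q N (i + 1)) * S (i + 1) := by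
      simp only [hS]
      rw [hab1, ← Finset.sum_neg_distrib]
      exact Finset.sum_congr rfl (fun i _ => by ring)
    have hE : Apq p q N = ∑ i ∈ Finset.range (N - 1),
        (Fw p q N i - Fw p q N (i + 1)) * ((i + 1 : ℕ) : ℝ) := by
      rw [← hA', hab2, ← Finset.sum_neg_distrib]
      exact Finset.sum_congr rfl (fun i _ => by ring)
    -- the error identity
    have hsplit : ∑ i ∈ Finset.range (N - 1),
          (Fw p q N i - Fw p q N (i + 1)) * (S (i + 1) - ((i + 1 : ℕ) : ℝ) * m)
        = (∑ i ∈ Finset.range (N - 1), (Fw p q N i - Fw p q N (i + 1)) * S (i + 1))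
          - (∑ i ∈ Finset.range (N - 1), (Fw p q N i - Fw p q N (i + 1)) * ((i + 1 : ℕ) : ℝ)) * m := by
      rw [Finset.sum_mul, ← Finset.sum_sub_distrib]
      exact Finset.sum_congr rfl (fun i _ => by ring)
    have hid : (Apq p q N)⁻¹ * (∑ n ∈ Finset.Icc 1 N, wpq p q ((n : ℝ) / N) * x n) - m
        = (Apq p q N)⁻¹ * ∑ i ∈ Finset.range (N - 1),
            (Fw p q N i - Fw p q N (i + 1)) * (S (i + 1) - ((i + 1 : ℕ) : ℝ) * m) := by
      rw [hIcc, hD, hsplit, ← hE, mul_sub, ← mul_assoc, inv_mul_cancel₀ hApos.ne', one_mul]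
    -- Lipschitz estimate for the weight increments
    have hlip : ∀ i ∈ Finset.range (N - 1), |Fw p q N i - Fw p q N (i + 1)| ≤ KL / N := by
      intro i hi
      rw [Finset.mem_range] at hi
      have hi2 : (i : ℝ) + 2 ≤ N := by
        have : i + 2 ≤ N := by exact_mod_cast (by omega : i + 2 ≤ N)
        exact_mod_cast this
      have ha : ((i + 1 : ℕ) : ℝ) / N ∈ Set.Icc (0:ℝ) 1 := by
        constructor
        · positivity
        · rw [div_le_one hNR]; push_cast; linarith
      have hb : ((i + 1 + 1 : ℕ) : ℝ) / N ∈ Set.Icc (0:ℝ) 1 := by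
        constructor
        · positivity
        · rw [div_le_one hNR]; push_cast; linarith
      have hdiff : |((i + 1 : ℕ) : ℝ) / N - ((i + 1 + 1 : ℕ) : ℝ) / N| = 1 / N := by
        rw [div_sub_div_same, abs_div, abs_of_pos hNR]
        congr 1
        push_cast
        rw [show ((i:ℝ) + 1) - ((i:ℝ) + 1 + 1) = -1 by ring, abs_neg, abs_one]
      have hlf := fpq_lipschitz hp hq _ ha _ hb
      unfold Fw
      rw [wpq_eq, wpq_eq, ← mul_sub, abs_mul, abs_of_nonneg (inv_nonneg.2 hc.le)]
      calc (cpq p q)⁻¹ * |fpq p q (((i + 1 : ℕ) : ℝ) / N) - fpq p q (((i + 1 + 1 : ℕ) : ℝ) / N)|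
          ≤ (cpq p q)⁻¹ * (Kpq p q * |((i + 1 : ℕ) : ℝ) / N - ((i + 1 + 1 : ℕ) : ℝ) / N|) :=
            mul_le_mul_of_nonneg_left hlf (inv_nonneg.2 hc.le)
        _ = (cpq p q)⁻¹ * (Kpq p q * (1 / N)) := by rw [hdiff]
        _ = KL / N := by rw [hKL]; ring
    have hru : ∀ i : ℕ, |S (i + 1) - ((i + 1 : ℕ) : ℝ) * m| = ((i : ℝ) + 1) * u i := by
      intro i
      have hk1 : ((i : ℝ) + 1) ≠ 0 := by positivity
      rw [hu_def]
      push_cast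
      rw [mul_div_cancel₀ _ hk1]
    have habs : |(Apq p q N)⁻¹ * (∑ n ∈ Finset.Icc 1 N, wpq p q ((n : ℝ) / N) * x n) - m|
        ≤ (Apq p q N)⁻¹ * ∑ i ∈ Finset.range (N - 1),
            |Fw p q N i - Fw p q N (i + 1)| * |S (i + 1) - ((i + 1 : ℕ) : ℝ) * m| := by
      rw [hid, abs_mul, abs_inv, abs_of_pos hApos]
      apply mul_le_mul_of_nonneg_left _ (inv_nonneg.2 hApos.le)
      refine (Finset.abs_sum_le_sum_abs _ _).trans ?_
      apply le_of_eq
      exact Finset.sum_congr rfl (fun i _ => abs_mul _ _)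
    have hsum1 : ∑ i ∈ Finset.range (N - 1),
          |Fw p q N i - Fw p q N (i + 1)| * |S (i + 1) - ((i + 1 : ℕ) : ℝ) * m|
        ≤ ∑ i ∈ Finset.range (N - 1), (KL / N) * (((i : ℝ) + 1) * u i) := by
      apply Finset.sum_le_sum
      intro i hi
      rw [hru i]
      apply mul_le_mul_of_nonneg_right (hlip i hi)
      have := hu0 i
      positivity
    have hsum2 : ∑ i ∈ Finset.range (N - 1), (KL / N) * (((i : ℝ) + 1) * u i)
        ≤ (KL / N) * ((N : ℝ) * ∑ k ∈ Finset.range (N - 1), u k) := by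
      rw [← Finset.mul_sum]
      apply mul_le_mul_of_nonneg_left _ (by positivity)
      rw [Finset.mul_sum]
      apply Finset.sum_le_sum
      intro i hi
      rw [Finset.mem_range] at hi
      have hiN : (i : ℝ) + 1 ≤ N := by
        have : i + 1 ≤ N := by omega
        exact_mod_cast this
      exact mul_le_mul_of_nonneg_right hiN (hu0 i)
    have hKLN : (KL / N) * ((N : ℝ) * ∑ k ∈ Finset.range (N - 1), u k)
        = KL * ∑ k ∈ Finset.range (N - 1), u k := by
      field_simp
    have hMpos : (0:ℝ) < ((N - 1 : ℕ) : ℝ) := by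
      have : 0 < N - 1 := by omega
      exact_mod_cast this
    have hVeq : ∑ k ∈ Finset.range (N - 1), u k = ((N - 1 : ℕ) : ℝ) * V (N - 1) := by
      rw [hV_def]
      rw [← mul_assoc, mul_inv_cancel₀ hMpos.ne', one_mul]
    have hV0' : 0 ≤ V (N - 1) := by
      rw [hV_def]
      have : 0 ≤ ∑ k ∈ Finset.range (N - 1), u k := Finset.sum_nonneg (fun k _ => hu0 k)
      positivity
    have hcast : ((N - 1 : ℕ) : ℝ) ≤ (N : ℝ) := by
      exact_mod_cast Nat.sub_le N 1
    have hAinv : (Apq p q N)⁻¹ ≤ (alphapq p q * N)⁻¹ :=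
      inv_anti₀ (by positivity) hA_lb
    have hfin : (alphapq p q * N)⁻¹ * (KL * ((N : ℝ) * V (N - 1))) = C * V (N - 1) := by
      rw [hC, mul_inv]
      field_simp
    calc |(Apq p q N)⁻¹ * (∑ n ∈ Finset.Icc 1 N, wpq p q ((n : ℝ) / N) * x n) - m|
        ≤ (Apq p q N)⁻¹ * ∑ i ∈ Finset.range (N - 1),
            |Fw p q N i - Fw p q N (i + 1)| * |S (i + 1) - ((i + 1 : ℕ) : ℝ) * m| := habs
      _ ≤ (Apq p q N)⁻¹ * (KL * ∑ k ∈ Finset.range (N - 1), u k) := by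
          apply mul_le_mul_of_nonneg_left _ (inv_nonneg.2 hApos.le)
          exact hsum1.trans (hsum2.trans_eq hKLN)
      _ = (Apq p q N)⁻¹ * (KL * (((N - 1 : ℕ) : ℝ) * V (N - 1))) := by rw [hVeq]
      _ ≤ (alphapq p q * N)⁻¹ * (KL * ((N : ℝ) * V (N - 1))) := by
          apply mul_le_mul hAinv _ _ (by positivity)
          · apply mul_le_mul_of_nonneg_left _ hKL0
            exact mul_le_mul_of_nonneg_right hcast hV0'
          · positivity
      _ = C * V (N - 1) := hfin
  -- conclude
  have hg : Tendsto (fun N : ℕ => C * V (N - 1)) atTop (𝓝 0) := by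
    have := (hV.comp (tendsto_sub_atTop_nat 1)).const_mul C
    simpa using this
  have h0 : Tendsto (fun N : ℕ =>
      (Apq p q N)⁻¹ * (∑ n ∈ Finset.Icc 1 N, wpq p q ((n : ℝ) / N) * x n) - m) atTop (𝓝 0) := by
    rw [tendsto_zero_iff_abs_tendsto_zero]
    apply squeeze_zero' (Filter.Eventually.of_forall fun N => abs_nonneg _) _ hg
    filter_upwards [eventually_ge_atTop 8] with N hN using bound N hN
  have h1 := h0.add_const m
  rw [zero_add] at h1
  exact h1.congr (fun N => by ring)

lemma sum_Icc_w {p q : ℝ} {N : ℕ} (hN : 1 ≤ N) :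
    ∑ n ∈ Finset.Icc 1 N, wpq p q ((n : ℝ) / N) = Apq p q N := by
  have hNR : (0:ℝ) < N := by
    have : 0 < N := by omega
    exact_mod_cast this
  have hw1 : wpq p q ((N : ℝ) / N) = 0 := by
    rw [div_self hNR.ne']
    unfold wpq
    rw [if_neg (by simp)]
  have hw0 : wpq p q (((0:ℕ) : ℝ) / N) = 0 := by
    rw [Nat.cast_zero, zero_div]
    unfold wpq
    rw [if_neg (by simp)]
  have h1 := Finset.sum_range_succ' (fun n : ℕ => wpq p q ((n : ℝ) / N)) N
  have h2 := Finset.sum_range_succ (fun n : ℕ => wpq p q ((n : ℝ) / N)) N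
  rw [hw0] at h1
  rw [hw1] at h2
  rw [add_zero] at h1 h2
  have hIcc : ∑ n ∈ Finset.Icc 1 N, wpq p q ((n : ℝ) / N)
      = ∑ i ∈ Finset.range N, wpq p q (((i + 1 : ℕ) : ℝ) / N) := by
    rw [← Finset.Ico_add_one_right_eq_Icc, Finset.sum_Ico_eq_sum_range]
    refine Finset.sum_congr (by norm_num) (fun i _ => ?_)
    rw [add_comm 1 i]
  rw [hIcc]
  unfold Apq
  rw [← h1, h2]

end WKAux

/-- Weighted Khinchin law of large numbers: for i.i.d. integrable random variables, the
weighted averages concentrate around the weighted averages of the means. -/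
theorem weighted_khinchin_law_of_large_numbers
    {Ω : Type*} [MeasurableSpace Ω] (μ : Measure Ω) [IsProbabilityMeasure μ]
    (p q : ℝ) (hp : 0 < p) (hq : 0 < q)
    (X : ℕ → Ω → ℝ) (hmeas : ∀ n, Measurable (X n))
    (hindep : iIndepFun X μ)
    (hident : ∀ n, IdentDistrib (X n) (X 1) μ μ)
    (hint : Integrable (X 1) μ) :
    ∀ ε : ℝ, 0 < ε →
      Tendsto (fun N : ℕ => μ {ω |
          |(Apq p q N)⁻¹ * ∑ n ∈ Finset.Icc 1 N, wpq p q ((n : ℝ) / N) * X n ω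
            - (Apq p q N)⁻¹ * ∑ n ∈ Finset.Icc 1 N, wpq p q ((n : ℝ) / N) * (∫ ω', X n ω' ∂μ)|
          < ε})
        atTop (nhds 1) := by
  intro ε hε
  set m : ℝ := ∫ ω', X 1 ω' ∂μ with hm
  set Z : ℕ → Ω → ℝ := fun N ω =>
    (Apq p q N)⁻¹ * ∑ n ∈ Finset.Icc 1 N, wpq p q ((n : ℝ) / N) * X n ω with hZ
  -- strong law for the shifted sequence
  have hslln : ∀ᵐ ω ∂μ,
      Tendsto (fun n : ℕ => (∑ i ∈ Finset.range n, X (i + 1) ω) / n) atTop (𝓝 m) := by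
    have h := ProbabilityTheory.strong_law_ae_real (fun i => X (i + 1)) hint
      (fun i j hij => hindep.indepFun (by omega))
      (fun i => (hident (i + 1)).trans (hident 1).symm)
    exact h
  have hae : ∀ᵐ ω ∂μ, Tendsto (fun N : ℕ => Z N ω) atTop (𝓝 m) := by
    filter_upwards [hslln] with ω hω using WKAux.key hp hq hω
  have hZmeas : ∀ N, Measurable (Z N) := by
    intro N
    apply Measurable.const_mul
    exact Finset.measurable_sum _ (fun n _ => (hmeas n).const_mul _)
  have hTIM : TendstoInMeasure μ Z atTop (fun _ => m) :=
    tendstoInMeasure_of_tendsto_ae (fun N => (hZmeas N).aestronglyMeasurable) hae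
  have hTIMe := (tendstoInMeasure_iff_dist.1 hTIM) ε hε
  have hmeasset : ∀ N, MeasurableSet {ω | ε ≤ dist (Z N ω) m} := by
    intro N
    exact measurableSet_le measurable_const ((hZmeas N).dist measurable_const)
  -- eventual identification of the sets
  have hset : ∀ᶠ N in atTop, μ {ω |
      |(Apq p q N)⁻¹ * ∑ n ∈ Finset.Icc 1 N, wpq p q ((n : ℝ) / N) * X n ω
        - (Apq p q N)⁻¹ * ∑ n ∈ Finset.Icc 1 N, wpq p q ((n : ℝ) / N) * (∫ ω', X n ω' ∂μ)| < ε}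
      = 1 - μ {ω | ε ≤ dist (Z N ω) m} := by
    filter_upwards [eventually_ge_atTop 8] with N hN
    have hA_lb := WKAux.Apq_lb hp hq hN
    have hApos : 0 < Apq p q N := by
      have : (0:ℝ) < N := by
        have : 0 < N := by omega
        exact_mod_cast this
      have := WKAux.alphapq_pos hp hq
      nlinarith
    have hmean : (Apq p q N)⁻¹ * ∑ n ∈ Finset.Icc 1 N, wpq p q ((n : ℝ) / N)
        * (∫ ω', X n ω' ∂μ) = m := by
      have hterm : ∀ n ∈ Finset.Icc 1 N, wpq p q ((n : ℝ) / N) * (∫ ω', X n ω' ∂μ)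
          = wpq p q ((n : ℝ) / N) * m := by
        intro n _
        rw [(hident n).integral_eq]
      rw [Finset.sum_congr rfl hterm, ← Finset.sum_mul, WKAux.sum_Icc_w (by omega),
        ← mul_assoc, inv_mul_cancel₀ hApos.ne', one_mul]
    have hsets : {ω |
        |(Apq p q N)⁻¹ * ∑ n ∈ Finset.Icc 1 N, wpq p q ((n : ℝ) / N) * X n ω
          - (Apq p q N)⁻¹ * ∑ n ∈ Finset.Icc 1 N, wpq p q ((n : ℝ) / N) * (∫ ω', X n ω' ∂μ)| < ε}
        = {ω | ε ≤ dist (Z N ω) m}ᶜ := by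
      ext ω
      simp only [Set.mem_setOf_eq, Set.mem_compl_iff, not_le, Real.dist_eq, hZ]
      rw [hmean]
    rw [hsets, prob_compl_eq_one_sub (hmeasset N)]
  -- conclude
  have hlim : Tendsto (fun N => 1 - μ {ω | ε ≤ dist (Z N ω) m}) atTop (𝓝 1) := by
    have hc := (ENNReal.continuous_sub_left ENNReal.one_ne_top).continuousAt
      (x := (0 : ENNReal))
    have := hc.tendsto.comp hTIMe
    simpa [Function.comp_def] using this
  exact Tendsto.congr' (by filter_upwards [hset] with N h using h.symm) hlim
end
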